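/- For every n ≥ 2, no left-invariant total order on ℤ^n is isolated: for every left-invariant total order ≺ on ℤ^n and every finite subset S ⊆ ℤ^n, there exists a left-invariant total order ≺' on ℤ^n with ≺' ≠ ≺ that agrees with ≺ on S × S. -/

import Mathlib

open Finset

lemma exists_between_finsets (A B : Finset ℚ) (h : ∀ a ∈ A, ∀ b ∈ B, a < b) :
    ∃ t : ℚ, (∀ a ∈ A, a < t) ∧ (∀ b ∈ B, t < b) := by
  rcases A.eq_empty_or_nonempty with hA | hA
  · rcases B.eq_empty_or_nonempty with hB | hB
    · exact ⟨0, by simp [hA], by simp [hB]⟩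
    · exact ⟨B.min' hB - 1, by simp [hA], fun b hb => by
        have := B.min'_le b hb; linarith⟩
  · rcases B.eq_empty_or_nonempty with hB | hB
    · exact ⟨A.max' hA + 1, fun a ha => by have := A.le_max' a ha; linarith, by simp [hB]⟩
    · refine ⟨(A.max' hA + B.min' hB) / 2, fun a ha => ?_, fun b hb => ?_⟩
      · have h1 := A.le_max' a ha
        have h2 := h _ (A.max'_mem hA) _ (B.min'_mem hB)
        linarith
      · have h1 := B.min'_le b hb
        have h2 := h _ (A.max'_mem hA) _ (B.min'_mem hB)
        linarith

theorem gordan : ∀ (n : ℕ) (ι : Type) (_ : Fintype ι) (v : ι → Fin n → ℚ),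
    (∃ y : Fin n → ℚ, ∀ i, 0 < ∑ j, y j * v i j) ∨
    (∃ c : ι → ℚ, (∀ i, 0 ≤ c i) ∧ (∃ i, c i ≠ 0) ∧ ∀ j, ∑ i, c i * v i j = 0) := by
  intro n
  induction n with
  | zero =>
    intro ι _ v
    cases isEmpty_or_nonempty ι with
    | inl h => exact Or.inl ⟨0, fun i => (h.false i).elim⟩
    | inr h =>
      obtain ⟨i₀⟩ := h
      classical
      refine Or.inr ⟨fun i => if i = i₀ then 1 else 0, ?_, ⟨i₀, by simp⟩, fun j => j.elim0⟩
      intro i; dsimp only; split <;> norm_num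
  | succ n IH =>
    intro ι _ v
    classical
    set l : ι → ℚ := fun i => v i (Fin.last n) with hl
    set w : ι → Fin n → ℚ := fun i j => v i j.castSucc with hw
    let u : {i : ι // l i = 0} ⊕ ({i : ι // 0 < l i} × {i : ι // l i < 0}) → Fin n → ℚ :=
      fun k => match k with
      | Sum.inl z => w z.1
      | Sum.inr (p, m) => fun j => (-l m.1) * w p.1 j + l p.1 * w m.1 j
    rcases IH _ inferInstance u with ⟨y', hy'⟩ | ⟨c, hc0, ⟨k₀, hk₀⟩, hcsum⟩
    · -- construct y
      set A : ι → ℚ := fun i => ∑ j, y' j * w i j with hA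
      have hdot : ∀ p m : ι, 0 < l p → l m < 0 →
          0 < (-l m) * A p + l p * A m := by
        intro p m hp hm
        have := hy' (Sum.inr (⟨p, hp⟩, ⟨m, hm⟩))
        calc 0 < ∑ j, y' j * ((-l m) * w p j + l p * w m j) := this
          _ = (-l m) * A p + l p * A m := by
              simp only [hA, Finset.mul_sum, mul_add, Finset.sum_add_distrib]
              congr 1 <;> (apply Finset.sum_congr rfl; intro j _; ring)
      obtain ⟨t, htl, htu⟩ := exists_between_finsets
        ((univ : Finset {i : ι // 0 < l i}).image (fun p => -(A p.1) / l p.1))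
        ((univ : Finset {i : ι // l i < 0}).image (fun m => A m.1 / (-l m.1)))
        (by
          intro a ha b hb
          simp only [Finset.mem_image, Finset.mem_univ, true_and] at ha hb
          obtain ⟨p, rfl⟩ := ha
          obtain ⟨m, rfl⟩ := hb
          rw [div_lt_div_iff₀ p.2 (by linarith [m.2] : (0:ℚ) < -l m.1)]
          have := hdot p.1 m.1 p.2 m.2
          nlinarith)
      refine Or.inl ⟨(Fin.snoc y' t : Fin (n+1) → ℚ), fun i => ?_⟩
      have hsplit : ∑ j, (Fin.snoc y' t : Fin (n+1) → ℚ) j * v i j = A i + t * l i := by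
        rw [Fin.sum_univ_castSucc]
        simp [hA, hw, hl]
      rw [hsplit]
      rcases lt_trichotomy (l i) 0 with hi | hi | hi
      · have hb : t < A i / (-l i) := htu _ (Finset.mem_image.2 ⟨⟨i, hi⟩, Finset.mem_univ _, rfl⟩)
        rw [lt_div_iff₀ (by linarith : (0:ℚ) < -l i)] at hb
        nlinarith
      · have := hy' (Sum.inl ⟨i, hi⟩)
        simp only [u] at this
        rw [hi]
        simpa [hA] using this
      · have hb : -(A i) / l i < t := htl _ (Finset.mem_image.2 ⟨⟨i, hi⟩, Finset.mem_univ _, rfl⟩)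
        rw [div_lt_iff₀ hi] at hb
        nlinarith
    · -- construct c
      set coeff : ({i : ι // l i = 0} ⊕ ({i : ι // 0 < l i} × {i : ι // l i < 0})) → ι → ℚ :=
        fun k i => match k with
        | Sum.inl z => if z.1 = i then 1 else 0
        | Sum.inr (p, m) => (if p.1 = i then -l m.1 else 0) + (if m.1 = i then l p.1 else 0)
        with hcoeff
      have hcoeff0 : ∀ k i, 0 ≤ coeff k i := by
        intro k i
        rcases k with z | ⟨p, m⟩
        · show (0:ℚ) ≤ if z.1 = i then 1 else 0
          split <;> norm_num
        · show (0:ℚ) ≤ (if p.1 = i then -l m.1 else 0) + (if m.1 = i then l p.1 else 0)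
          apply add_nonneg
          · split
            · linarith [m.2]
            · exact le_rfl
          · split
            · linarith [p.2]
            · exact le_rfl
      set C : ι → ℚ := fun i => ∑ k, c k * coeff k i with hC
      have hinner : ∀ k (j : Fin (n+1)), ∑ i, coeff k i * v i j =
          (match k with
           | Sum.inl z => v z.1 j
           | Sum.inr (p, m) => (-l m.1) * v p.1 j + l p.1 * v m.1 j) := by
        intro k j
        rcases k with z | ⟨p, m⟩
        · simp [hcoeff, ite_mul, Finset.sum_ite_eq]
        · simp [hcoeff, ite_mul, add_mul, Finset.sum_add_distrib, Finset.sum_ite_eq]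
      refine Or.inr ⟨C, fun i => Finset.sum_nonneg fun k _ => mul_nonneg (hc0 k) (hcoeff0 k i),
        ?_, fun j => ?_⟩
      · -- nontriviality
        have hk₀pos : 0 < c k₀ := lt_of_le_of_ne (hc0 k₀) (Ne.symm hk₀)
        rcases k₀ with z | ⟨p, m⟩
        · refine ⟨z.1, ne_of_gt ?_⟩
          have hle : c (Sum.inl z) * coeff (Sum.inl z) z.1 ≤ C z.1 :=
            Finset.single_le_sum (fun k _ => mul_nonneg (hc0 k) (hcoeff0 k z.1))
              (Finset.mem_univ _)
          have : coeff (Sum.inl z) z.1 = 1 := by simp [hcoeff]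
          rw [this] at hle
          linarith
        · refine ⟨p.1, ne_of_gt ?_⟩
          have hle : c (Sum.inr (p, m)) * coeff (Sum.inr (p, m)) p.1 ≤ C p.1 :=
            Finset.single_le_sum (fun k _ => mul_nonneg (hc0 k) (hcoeff0 k p.1))
              (Finset.mem_univ _)
          have hne : m.1 ≠ p.1 := by
            intro h
            have := m.2
            rw [h] at this
            linarith [p.2]
          have : coeff (Sum.inr (p, m)) p.1 = -l m.1 := by simp [hcoeff, hne]
          rw [this] at hle
          have : 0 < c (Sum.inr (p, m)) * -l m.1 := mul_pos hk₀pos (by linarith [m.2])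
          linarith
      · -- sum is zero
        have hswap : ∑ i, C i * v i j = ∑ k, c k * (∑ i, coeff k i * v i j) := by
          simp only [hC, Finset.sum_mul, Finset.mul_sum]
          rw [Finset.sum_comm]
          apply Finset.sum_congr rfl; intro k _
          apply Finset.sum_congr rfl; intro i _
          ring
        rw [hswap]
        induction j using Fin.lastCases with
        | last =>
          have hz : ∀ k, (∑ i, coeff k i * v i (Fin.last n)) = 0 := by
            intro k
            rw [hinner]
            rcases k with z | ⟨p, m⟩
            · simpa [hl] using z.2
            · simp only [hl]
              ring
          simp [hz]
        | cast j' =>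
          calc ∑ k, c k * (∑ i, coeff k i * v i j'.castSucc)
              = ∑ k, c k * u k j' := by
                refine Finset.sum_congr rfl (fun k _ => ?_)
                rw [hinner]
                rcases k with z | ⟨p, m⟩ <;> rfl
            _ = 0 := hcsum j'

/-- A left-invariant total order (left order) on an additive group `G`. -/
def IsAddLeftOrder {G : Type*} [AddGroup G] (r : G → G → Prop) : Prop :=
  IsStrictTotalOrder G r ∧ ∀ h f g : G, r f g → r (h + f) (h + g)

lemma IsAddLeftOrder.swap' {G : Type*} [AddGroup G] {q : G → G → Prop}
    (hq : IsAddLeftOrder q) : IsAddLeftOrder (fun a b => q b a) := by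
  obtain ⟨hst, hinv⟩ := hq
  refine ⟨{ trichotomous := fun a b h1 h2 =>
              (((?_ : ∀ a b : G, q b a ∨ a = b ∨ q a b) a b).resolve_left h1).resolve_right h2, irrefl := fun a h => hst.irrefl a h,
            trans := fun a b c h1 h2 => hst.trans c b a h2 h1 },
          fun h f g hfg => hinv h g f hfg⟩
  intro a b
  rcases (haveI := hst; trichotomous_of q a b) with h | h | h
  · exact Or.inr (Or.inr h)
  · exact Or.inr (Or.inl h)
  · exact Or.inl h

lemma IsAddLeftOrder.lexMk {G : Type*} [AddCommGroup G] (φ : G → ℤ)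
    (hφ : ∀ a b : G, φ (a + b) = φ a + φ b) {q : G → G → Prop} (hq : IsAddLeftOrder q) :
    IsAddLeftOrder (fun a b => 0 < φ (b - a) ∨ (φ (b - a) = 0 ∧ q a b)) := by
  obtain ⟨hst, hinv⟩ := hq
  have hφ0 : φ 0 = 0 := by
    have := hφ 0 0
    simpa using this
  have hφneg : ∀ a : G, φ (-a) = -φ a := by
    intro a
    have := hφ a (-a)
    simp [hφ0] at this
    linarith
  constructor
  · refine { trichotomous := fun a b h1 h2 =>
        (((?_ : ∀ a b : G, (0 < φ (b - a) ∨ (φ (b - a) = 0 ∧ q a b)) ∨ a = b ∨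
          (0 < φ (a - b) ∨ (φ (a - b) = 0 ∧ q b a))) a b).resolve_left h1).resolve_right h2, irrefl := ?_, trans := ?_ }
    · -- trichotomous
      intro a b
      rcases lt_trichotomy (φ (b - a)) 0 with h | h | h
      · refine Or.inr (Or.inr (Or.inl ?_))
        rw [show a - b = -(b - a) by abel, hφneg]
        omega
      · rcases (haveI := hst; trichotomous_of q a b) with h' | h' | h'
        · exact Or.inl (Or.inr ⟨h, h'⟩)
        · exact Or.inr (Or.inl h')
        · refine Or.inr (Or.inr (Or.inr ⟨?_, h'⟩))
          rw [show a - b = -(b - a) by abel, hφneg, h]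
          rfl
      · exact Or.inl (Or.inl h)
    · -- irrefl
      intro a h
      simp [hφ0] at h
      exact hst.irrefl a h
    · -- trans
      intro a b c hab hbc
      have key : φ (c - a) = φ (c - b) + φ (b - a) := by
        rw [← hφ]
        congr 1
        abel
      rcases hab with h1 | ⟨h1, h1'⟩ <;> rcases hbc with h2 | ⟨h2, h2'⟩
      · exact Or.inl (by omega)
      · exact Or.inl (by omega)
      · exact Or.inl (by omega)
      · exact Or.inr ⟨by omega, hst.trans a b c h1' h2'⟩
  · -- invariance
    intro h f g hfg
    have : h + g - (h + f) = g - f := by abel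
    rw [this]
    rcases hfg with h1 | ⟨h1, h1'⟩
    · exact Or.inl h1
    · exact Or.inr ⟨h1, hinv h f g h1'⟩

/-- For `n ≥ 2`, no left order on `ℤⁿ` is isolated: any left order is
approximated by distinct left orders agreeing with it on any given finite set. -/
theorem stmt_15 (n : ℕ) (hn : 2 ≤ n) (r : (Fin n → ℤ) → (Fin n → ℤ) → Prop)
    (hr : IsAddLeftOrder r) (S : Finset (Fin n → ℤ)) :
    ∃ r' : (Fin n → ℤ) → (Fin n → ℤ) → Prop, IsAddLeftOrder r' ∧ r' ≠ r ∧
      ∀ a ∈ S, ∀ b ∈ S, (r' a b ↔ r a b) := by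
  classical
  obtain ⟨hst, hinv⟩ := hr
  have hr01 : ∀ a b : Fin n → ℤ, r a b ↔ r 0 (b - a) := by
    intro a b
    constructor
    · intro h
      have := hinv (-a) a b h
      simpa [neg_add_cancel, neg_add_eq_sub] using this
    · intro h
      have := hinv a 0 (b - a) h
      simpa using this
  have hasymm : ∀ a b : Fin n → ℤ, r a b → ¬ r b a :=
    fun a b h h' => hst.irrefl a (hst.trans a b a h h')
  have hpos_add : ∀ x y : Fin n → ℤ, r 0 x → r 0 y → r 0 (x + y) := by
    intro x y hx hy
    exact hst.trans 0 x (x + y) hx (by simpa using hinv x 0 y hy)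
  set T : Finset (Fin n → ℤ) :=
    ((S ×ˢ S).image fun p => p.2 - p.1).filter (fun x => r 0 x) with hT
  have hTpos : ∀ d ∈ T, r 0 d := fun d hd => (Finset.mem_filter.mp hd).2
  have hTmem : ∀ a ∈ S, ∀ b ∈ S, r a b → b - a ∈ T := by
    intro a ha b hb hab
    refine Finset.mem_filter.mpr ⟨Finset.mem_image.mpr ⟨(a, b), Finset.mem_product.mpr ⟨ha, hb⟩, rfl⟩,
      (hr01 a b).mp hab⟩
  rcases gordan n {x // x ∈ T} inferInstance (fun d j => ((d.1 j : ℤ) : ℚ)) with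
    ⟨y, hy⟩ | ⟨c, hc0, ⟨i₀, hi₀⟩, hcs⟩
  · -- main case: y is a rational functional positive on T
    -- scale to an integer functional
    set z : Fin n → ℤ := fun j => (y j).num * ∏ k ∈ Finset.univ.erase j, ((y k).den : ℤ) with hz
    have hzcast : ∀ j, (z j : ℚ) = y j * ∏ k, ((y k).den : ℚ) := by
      intro j
      rw [← Finset.mul_prod_erase Finset.univ _ (Finset.mem_univ j)]
      rw [hz]
      push_cast
      rw [← mul_assoc]
      congr 1
      have hd : ((y j).den : ℚ) ≠ 0 := by
        exact_mod_cast (y j).den_ne_zero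
      exact (div_eq_iff hd).mp (Rat.num_div_den (y j))
    have hzpos : ∀ d ∈ T, 0 < ∑ j, z j * d j := by
      intro d hd
      have h1 := hy ⟨d, hd⟩
      have h2 : (0:ℚ) < ∑ j, (z j : ℚ) * (d j : ℚ) := by
        have : ∑ j, (z j : ℚ) * (d j : ℚ) = (∏ k, ((y k).den : ℚ)) * ∑ j, y j * (d j : ℚ) := by
          rw [Finset.mul_sum]
          refine Finset.sum_congr rfl fun j _ => ?_
          rw [hzcast j]
          ring
        rw [this]
        refine mul_pos ?_ h1
        refine Finset.prod_pos fun k _ => ?_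
        exact_mod_cast (y k).pos
      exact_mod_cast h2
    set φ : (Fin n → ℤ) → ℤ := fun x => ∑ j, z j * x j with hφdef
    have hφadd : ∀ a b : Fin n → ℤ, φ (a + b) = φ a + φ b := by
      intro a b
      simp only [hφdef, Pi.add_apply, mul_add]
      rw [Finset.sum_add_distrib]
    -- a nonzero kernel vector
    have hker : ∃ x₀ : Fin n → ℤ, x₀ ≠ 0 ∧ φ x₀ = 0 := by
      have h01 : (⟨0, by omega⟩ : Fin n) ≠ ⟨1, by omega⟩ := by
        intro h
        simpa using congrArg Fin.val h
      set j0 : Fin n := ⟨0, by omega⟩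
      set j1 : Fin n := ⟨1, by omega⟩
      have hsingle : ∀ (a : ℤ) (i : Fin n), φ (fun j => if j = i then a else 0) = z i * a := by
        intro a i
        simp only [hφdef]
        rw [Finset.sum_eq_single i]
        · simp
        · intro b _ hb
          simp [hb]
        · intro h
          exact absurd (Finset.mem_univ i) h
      by_cases hz0 : z j0 = 0
      · refine ⟨fun j => if j = j0 then 1 else 0, ?_, ?_⟩
        · intro h
          have := congrFun h j0
          simp at this
        · rw [hsingle, hz0, zero_mul]
      · refine ⟨fun j => (if j = j0 then z j1 else 0) - (if j = j1 then z j0 else 0), ?_, ?_⟩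
        · intro h
          have := congrFun h j1
          simp [h01, Ne.symm h01] at this
          exact hz0 this
        · have : (fun j => (if j = j0 then z j1 else 0) - (if j = j1 then z j0 else 0))
              = (fun j => if j = j0 then z j1 else 0) + (fun j => if j = j1 then -(z j0) else 0) := by
            funext j
            by_cases h0 : j = j0 <;> by_cases h1 : j = j1 <;>
              simp [h0, h1, h01, Ne.symm h01]
          rw [this, hφadd, hsingle, hsingle]
          ring
    obtain ⟨x₀, hx₀ne, hx₀ker⟩ := hker
    -- the two perturbed orders
    set r1 : (Fin n → ℤ) → (Fin n → ℤ) → Prop :=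
      fun a b => 0 < φ (b - a) ∨ (φ (b - a) = 0 ∧ r a b) with hr1
    set r2 : (Fin n → ℤ) → (Fin n → ℤ) → Prop :=
      fun a b => 0 < φ (b - a) ∨ (φ (b - a) = 0 ∧ r b a) with hr2
    have hlo1 : IsAddLeftOrder r1 := IsAddLeftOrder.lexMk φ hφadd ⟨hst, hinv⟩
    have hlo2 : IsAddLeftOrder r2 := by
      have := IsAddLeftOrder.lexMk φ hφadd (IsAddLeftOrder.swap' ⟨hst, hinv⟩)
      exact this
    have hφ0 : φ 0 = 0 := by simp [hφdef]
    have hφsub : ∀ a b : Fin n → ℤ, φ (a - b) = -φ (b - a) := by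
      intro a b
      have h1 := hφadd (a - b) (b - a)
      have h2 : (a - b) + (b - a) = 0 := by abel
      rw [h2, hφ0] at h1
      omega
    -- agreement on S
    have hagree1 : ∀ a ∈ S, ∀ b ∈ S, (r1 a b ↔ r a b) := by
      intro a ha b hb
      constructor
      · intro h
        rcases (haveI := hst; trichotomous_of r a b) with h' | h' | h'
        · exact h'
        · exfalso
          subst h'
          have hz' : a - a = 0 := sub_self a
          rcases h with h | ⟨_, h⟩
          · rw [hz', hφ0] at h
            omega
          · exact hst.irrefl a h
        · exfalso
          have hm : 0 < φ (a - b) := hzpos _ (hTmem b hb a ha h')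
          have hs := hφsub a b
          rcases h with h | ⟨h, _⟩ <;> omega
      · intro h
        exact Or.inl (hzpos _ (hTmem a ha b hb h))
    have hagree2 : ∀ a ∈ S, ∀ b ∈ S, (r2 a b ↔ r a b) := by
      intro a ha b hb
      constructor
      · intro h
        rcases (haveI := hst; trichotomous_of r a b) with h' | h' | h'
        · exact h'
        · exfalso
          subst h'
          have hz' : a - a = 0 := sub_self a
          rcases h with h | ⟨_, h⟩
          · rw [hz', hφ0] at h
            omega
          · exact hst.irrefl a h
        · exfalso
          have hm : 0 < φ (a - b) := hzpos _ (hTmem b hb a ha h')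
          have hs := hφsub a b
          rcases h with h | ⟨h, _⟩ <;> omega
      · intro h
        exact Or.inl (hzpos _ (hTmem a ha b hb h))
    -- the two orders are distinct
    have hne12 : r1 ≠ r2 := by
      intro h
      have h0 : φ (x₀ - 0) = 0 := by rw [sub_zero]; exact hx₀ker
      have h0' : φ (0 - x₀) = 0 := by
        have := hφsub 0 x₀
        omega
      rcases (haveI := hst; trichotomous_of r 0 x₀) with hx | hx | hx
      · have h1 : r1 0 x₀ := Or.inr ⟨h0, hx⟩
        rw [h] at h1
        rcases h1 with h1 | ⟨_, h1⟩
        · omega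
        · exact hasymm 0 x₀ hx h1
      · exact hx₀ne hx.symm
      · have h1 : r1 x₀ 0 := Or.inr ⟨h0', hx⟩
        rw [h] at h1
        rcases h1 with h1 | ⟨_, h1⟩
        · omega
        · exact hasymm x₀ 0 hx h1
    by_cases hcase : r1 = r
    · refine ⟨r2, hlo2, ?_, hagree2⟩
      intro h2
      exact hne12 (hcase.trans h2.symm)
    · exact ⟨r1, hlo1, hcase, hagree1⟩
  · -- Gordan's alternative: contradiction with the semigroup property
    exfalso
    set N : ℤ := ∏ k : {x // x ∈ T}, ((c k).den : ℤ) with hN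
    set m : {x // x ∈ T} → ℤ :=
      fun i => (c i).num * ∏ k ∈ Finset.univ.erase i, ((c k).den : ℤ) with hm
    have hmcast : ∀ i, (m i : ℚ) = c i * (N : ℚ) := by
      intro i
      rw [hm, hN]
      push_cast
      rw [← Finset.mul_prod_erase Finset.univ (fun k => ((c k).den : ℚ)) (Finset.mem_univ i)]
      rw [← mul_assoc]
      congr 1
      have hd : ((c i).den : ℚ) ≠ 0 := by
        exact_mod_cast (c i).den_ne_zero
      exact (div_eq_iff hd).mp (Rat.num_div_den (c i))
    have hmnn : ∀ i, 0 ≤ m i := by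
      intro i
      refine mul_nonneg (Rat.num_nonneg.mpr (hc0 i)) (Finset.prod_nonneg fun k _ => ?_)
      positivity
    have hmpos : 0 < m i₀ := by
      refine mul_pos (Rat.num_pos.mpr (lt_of_le_of_ne (hc0 i₀) (Ne.symm hi₀)))
        (Finset.prod_pos fun k _ => ?_)
      exact_mod_cast (c k).pos
    have hsum0 : ∀ j : Fin n, ∑ i : {x // x ∈ T}, m i * (i.1 j) = 0 := by
      intro j
      have hq : ((∑ i : {x // x ∈ T}, m i * (i.1 j) : ℤ) : ℚ) = 0 := by
        push_cast
        have he : ∀ i : {x // x ∈ T},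
            (m i : ℚ) * ((i.1 j : ℤ) : ℚ) = (N : ℚ) * (c i * ((i.1 j : ℤ) : ℚ)) := by
          intro i
          rw [hmcast]
          ring
        rw [Finset.sum_congr rfl (fun i _ => he i), ← Finset.mul_sum, hcs j, mul_zero]
      exact_mod_cast hq
    set g : Fin n → ℤ := ∑ i : {x // x ∈ T}, (m i).toNat • i.1 with hg
    have hg0 : g = 0 := by
      funext j
      have h1 : g j = ∑ i : {x // x ∈ T}, ((m i).toNat : ℤ) * i.1 j := by
        rw [hg, Finset.sum_apply]
        refine Finset.sum_congr rfl fun i _ => ?_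
        simp [nsmul_eq_mul]
      rw [h1, Finset.sum_congr rfl (fun i _ => by rw [Int.toNat_of_nonneg (hmnn i)])]
      simpa using hsum0 j
    have hsmul : ∀ (x : Fin n → ℤ) (k : ℕ), r 0 x → (k • x = 0 ∨ r 0 (k • x)) := by
      intro x k hx
      induction k with
      | zero => left; simp
      | succ k ih =>
        rw [succ_nsmul]
        rcases ih with h | h
        · rw [h, zero_add]
          right
          exact hx
        · right
          exact hpos_add _ _ h hx
    have hQsum : ∀ (F : Finset {x // x ∈ T}),
        (∑ i ∈ F, (m i).toNat • i.1) = 0 ∨ r 0 (∑ i ∈ F, (m i).toNat • i.1) := by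
      intro F
      refine Finset.sum_induction _ (fun x => x = 0 ∨ r 0 x) ?_ (Or.inl rfl) ?_
      · rintro a b (rfl | ha) (rfl | hb)
        · left; simp
        · right; simpa using hb
        · right; simpa using ha
        · right; exact hpos_add _ _ ha hb
      · intro i _
        exact hsmul i.1 _ (hTpos i.1 i.2)
    have hsmul' : ∀ (x : Fin n → ℤ) (k : ℕ), r 0 x → r 0 ((k + 1) • x) := by
      intro x k hx
      induction k with
      | zero => simpa using hx
      | succ k ih =>
        rw [succ_nsmul]
        exact hpos_add _ _ ih hx
    have hpos1 : r 0 ((m i₀).toNat • i₀.1) := by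
      obtain ⟨t, ht⟩ := Nat.exists_eq_succ_of_ne_zero (by omega : (m i₀).toNat ≠ 0)
      rw [ht]
      exact hsmul' i₀.1 t (hTpos i₀.1 i₀.2)
    have hposg : r 0 g := by
      rw [hg, ← Finset.add_sum_erase _ _ (Finset.mem_univ i₀)]
      rcases hQsum (Finset.univ.erase i₀) with h | h
      · rw [h, add_zero]
        exact hpos1
      · exact hpos_add _ _ hpos1 h
    rw [hg0] at hposg
    exact hst.irrefl 0 hposg
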